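/- (Proposition 3.3) Let α < β, let f, f₁, f₂ : (α, β) → ℝ be real-analytic with f = f₁ + f₂, and let p₁, p₂, p₃ be real polynomials with p₃ not identically zero. Define the operator L = p₃(t)·d²/dt² + p₂(t)·d/dt + p₁(t) and set r = L f. Assume L f₁ = 0 on (α, β), and that f₁ and r are not identically zero with finitely many zeros in (α, β). Then f is not identically zero, f has finitely many zeros in (α, β), and N(f) ≤ 3·N(p₃) + 3·N(f₁) + N(r) + 2, where N(φ) denotes the number of zeros of φ in (α, β) counted with multiplicity. -/

import Mathlib

/-- Vanishing order of `f` at `t`: the least `k` with `f⁽ᵏ⁾(t) ≠ 0`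
(equals the multiplicity of the zero `t` when `f(t) = 0`, and `0` otherwise). -/
noncomputable def zeroOrder (f : ℝ → ℝ) (t : ℝ) : ℕ :=
  sInf {k : ℕ | iteratedDeriv k f t ≠ 0}

/-- `f` has exactly `l` zeros in `J`, counted with multiplicity. -/
def ZerosCountEq (J : Set ℝ) (f : ℝ → ℝ) (l : ℕ) : Prop :=
  ∃ Z : Finset ℝ, (∀ t : ℝ, t ∈ Z ↔ t ∈ J ∧ f t = 0) ∧ ∑ t ∈ Z, zeroOrder f t = l

/-- `f` has at most `l` zeros in `J`, counted with multiplicity. -/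
def ZerosCountLE (J : Set ℝ) (f : ℝ → ℝ) (l : ℕ) : Prop :=
  ∃ Z : Finset ℝ, (∀ t : ℝ, t ∈ Z ↔ t ∈ J ∧ f t = 0) ∧ ∑ t ∈ Z, zeroOrder f t ≤ l

open Set Filter Topology

lemma zeroOrder_eq_zero_of_ne {f : ℝ → ℝ} {t : ℝ} (h : f t ≠ 0) : zeroOrder f t = 0 :=
  Nat.sInf_eq_zero.2 (Or.inl (by simpa [iteratedDeriv_zero] using h))

lemma analyticAt_deriv {g : ℝ → ℝ} {t : ℝ} (hg : AnalyticAt ℝ g t) :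
    AnalyticAt ℝ (deriv g) t :=
  (AnalyticOnNhd.deriv (fun _ hy => hy : AnalyticOnNhd ℝ g {y | AnalyticAt ℝ g y})) t hg

lemma analyticAt_polyEval (p : Polynomial ℝ) (t : ℝ) :
    AnalyticAt ℝ (fun x => p.eval x) t := by
  have h := (analyticAt_id (𝕜 := ℝ) (E := ℝ) (z := t)).aeval_polynomial p
  have : (fun x : ℝ => (Polynomial.aeval (id x)) p) = fun x => p.eval x := by
    funext x; simp [Polynomial.coe_aeval_eq_eval]
  rwa [this] at h

/-- derivative of a monomial representation -/
lemma rep_deriv {g f : ℝ → ℝ} {t : ℝ} {n : ℕ} (hg : AnalyticAt ℝ g t)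
    (hf : f =ᶠ[𝓝 t] fun x => (x - t) ^ (n + 1) * g x) :
    deriv f =ᶠ[𝓝 t] fun x => (x - t) ^ n * (((n : ℝ) + 1) * g x + (x - t) * deriv g x) := by
  have hg' : ∀ᶠ x in 𝓝 t, DifferentiableAt ℝ g x :=
    hg.eventually_analyticAt.mono fun x h => h.differentiableAt
  refine hf.deriv.trans ?_
  filter_upwards [hg'] with x hx
  have h1 : HasDerivAt (fun y : ℝ => (y - t) ^ (n + 1)) ((n + 1 : ℝ) * (x - t) ^ n) x := by
    have := ((hasDerivAt_id x).sub_const t).pow (n + 1)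
    simpa [Pi.pow_def] using this
  have h2 := h1.mul hx.hasDerivAt
  have h3 : deriv (fun x => (x - t) ^ (n + 1) * g x) x = _ := h2.deriv
  rw [h3]
  ring

lemma rep_iteratedDeriv : ∀ (n : ℕ) (g f : ℝ → ℝ) (t : ℝ), AnalyticAt ℝ g t →
    (f =ᶠ[𝓝 t] fun x => (x - t) ^ n * g x) →
    (∀ k < n, iteratedDeriv k f t = 0) ∧ iteratedDeriv n f t = n.factorial * g t := by
  intro n
  induction n with
  | zero =>
    intro g f t hg hf
    refine ⟨fun k hk => absurd hk (Nat.not_lt_zero k), ?_⟩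
    have := hf.eq_of_nhds
    simpa [iteratedDeriv_zero] using this
  | succ n ih =>
    intro g f t hg hf
    set g' : ℝ → ℝ := fun x => ((n : ℝ) + 1) * g x + (x - t) * deriv g x with hg'def
    have hg' : AnalyticAt ℝ g' t := by
      exact (analyticAt_const.mul hg).add
        (((analyticAt_id).sub analyticAt_const).mul (analyticAt_deriv hg))
    have hd : deriv f =ᶠ[𝓝 t] fun x => (x - t) ^ n * g' x := rep_deriv hg hf
    obtain ⟨ih1, ih2⟩ := ih g' (deriv f) t hg' hd
    have hf0 : f t = 0 := by
      have := hf.eq_of_nhds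
      simpa using this
    constructor
    · intro k hk
      match k with
      | 0 => simpa [iteratedDeriv_zero] using hf0
      | (k + 1) =>
        rw [iteratedDeriv_succ']
        exact ih1 k (by omega)
    · rw [iteratedDeriv_succ', ih2]
      have : g' t = ((n : ℝ) + 1) * g t := by simp [hg'def]
      rw [this, Nat.factorial_succ]
      push_cast
      ring

lemma vanish_of_rep {f g : ℝ → ℝ} {t : ℝ} {n : ℕ} (hg : AnalyticAt ℝ g t)
    (hf : f =ᶠ[𝓝 t] fun x => (x - t) ^ n * g x) : ∀ k < n, iteratedDeriv k f t = 0 :=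
  (rep_iteratedDeriv n g f t hg hf).1

lemma zeroOrder_eq_of_rep {f g : ℝ → ℝ} {t : ℝ} {n : ℕ} (hg : AnalyticAt ℝ g t) (hgt : g t ≠ 0)
    (hf : f =ᶠ[𝓝 t] fun x => (x - t) ^ n * g x) :
    zeroOrder f t = n ∧ iteratedDeriv n f t ≠ 0 ∧ ∀ k < n, iteratedDeriv k f t = 0 := by
  obtain ⟨h1, h2⟩ := rep_iteratedDeriv n g f t hg hf
  have hn : iteratedDeriv n f t ≠ 0 := by
    rw [h2]
    have : (n.factorial : ℝ) ≠ 0 := by positivity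
    exact mul_ne_zero this hgt
  refine ⟨?_, hn, h1⟩
  have hmem : n ∈ {k : ℕ | iteratedDeriv k f t ≠ 0} := hn
  refine le_antisymm (Nat.sInf_le hmem) ?_
  by_contra h
  push_neg at h
  have hm := Nat.sInf_mem (⟨n, hmem⟩ : {k : ℕ | iteratedDeriv k f t ≠ 0}.Nonempty)
  exact hm (h1 _ h)

lemma zeroOrder_spec {f : ℝ → ℝ} {t : ℝ} (hf : AnalyticAt ℝ f t) (hne : ¬ f =ᶠ[𝓝 t] 0) :
    ∃ g : ℝ → ℝ, AnalyticAt ℝ g t ∧ g t ≠ 0 ∧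
      f =ᶠ[𝓝 t] fun x => (x - t) ^ (zeroOrder f t) * g x := by
  have htop : analyticOrderAt f t ≠ ⊤ := fun h => hne (analyticOrderAt_eq_top.1 h)
  lift analyticOrderAt f t to ℕ using htop with n hn
  obtain ⟨g, hg, hgt, hrep⟩ := (hf.analyticOrderAt_eq_natCast (n := n)).1 hn.symm
  have hrep' : f =ᶠ[𝓝 t] fun x => (x - t) ^ n * g x := by
    filter_upwards [hrep] with x hx
    simpa [smul_eq_mul] using hx
  have := (zeroOrder_eq_of_rep hg hgt hrep').1
  rw [this]
  exact ⟨g, hg, hgt, hrep'⟩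

lemma zeroOrder_pos {f : ℝ → ℝ} {t : ℝ} (hf : AnalyticAt ℝ f t) (hne : ¬ f =ᶠ[𝓝 t] 0)
    (h0 : f t = 0) : 1 ≤ zeroOrder f t := by
  by_contra h
  push_neg at h
  interval_cases h' : zeroOrder f t
  obtain ⟨g, hg, hgt, hrep⟩ := zeroOrder_spec hf hne
  rw [h'] at hrep
  have := hrep.eq_of_nhds
  simp at this
  exact hgt (by rw [← this]; exact h0)

lemma not_eventuallyEq_zero_of_finite_zeros {f : ℝ → ℝ} {t : ℝ} {J : Set ℝ} {Z : Finset ℝ}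
    (hJ : IsOpen J) (hZ : ∀ x ∈ J, f x = 0 → x ∈ Z) (ht : t ∈ J) : ¬ f =ᶠ[𝓝 t] 0 := by
  intro h
  have hmem : {x | f x = 0} ∈ 𝓝 t := by
    filter_upwards [h] with x hx using hx
  obtain ⟨s, hs_sub, hs_open, hts⟩ := mem_nhds_iff.1 hmem
  have hso : IsOpen (s ∩ J) := hs_open.inter hJ
  have hne : (s ∩ J).Nonempty := ⟨t, hts, ht⟩
  obtain ⟨t', ht'⟩ := hne
  obtain ⟨ε, hε, hball⟩ := Metric.isOpen_iff.1 hso t' ht'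
  have hIoo : Ioo (t' - ε) (t' + ε) ⊆ s ∩ J := by
    rwa [← Real.ball_eq_Ioo]
  have hinf : (Ioo (t' - ε) (t' + ε)).Infinite := Set.Ioo_infinite (by linarith)
  have : (Ioo (t' - ε) (t' + ε)) ⊆ (Z : Set ℝ) := fun x hx =>
    hZ x (hIoo hx).2 (hs_sub (hIoo hx).1)
  exact (Z.finite_toSet.subset this).not_infinite hinf

lemma exists_gap_finset (P : ℝ → Prop) :
    ∀ D : Finset ℝ,
    (∀ x ∈ D, ∀ y ∈ D, x < y → ∃ c, x < c ∧ c < y ∧ P c) →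
    ∃ E : Finset ℝ, (∀ e ∈ E, P e ∧ e ∉ D ∧ ∃ d ∈ D, d < e) ∧ D.card ≤ E.card + 1 := by
  intro D
  induction D using Finset.strongInduction with
  | _ D ih =>
    intro hgap
    by_cases hD : D.card ≤ 1
    · exact ⟨∅, by simp, by simpa using hD⟩
    push_neg at hD
    have hDne : D.Nonempty := Finset.card_pos.1 (by omega)
    set d₀ := D.min' hDne with hd₀
    have hd₀D : d₀ ∈ D := D.min'_mem hDne
    set D' := D.erase d₀ with hD'
    have hD'card : D'.card + 1 = D.card := Finset.card_erase_add_one hd₀D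
    have hD'ne : D'.Nonempty := Finset.card_pos.1 (by omega)
    set d₁ := D'.min' hD'ne with hd₁
    have hd₁D' : d₁ ∈ D' := D'.min'_mem hD'ne
    have hd₀₁ : d₀ < d₁ := by
      rcases lt_or_eq_of_le (D.min'_le d₁ (Finset.mem_of_mem_erase hd₁D')) with h | h
      · exact h
      · exact absurd h.symm (Finset.ne_of_mem_erase hd₁D')
    obtain ⟨c, hc₀, hc₁, hPc⟩ := hgap d₀ hd₀D d₁ (Finset.mem_of_mem_erase hd₁D') hd₀₁
    obtain ⟨E', hE', hcard'⟩ := ih D' (Finset.erase_ssubset hd₀D)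
      (fun x hx y hy hxy => hgap x (Finset.mem_of_mem_erase hx) y (Finset.mem_of_mem_erase hy) hxy)
    have hcE' : c ∉ E' := by
      intro hc
      obtain ⟨-, -, d, hd, hdc⟩ := hE' c hc
      exact absurd (lt_trans (lt_of_le_of_lt (D'.min'_le d hd) hdc) hc₁) (lt_irrefl _)
    have hcD : c ∉ D := by
      intro hc
      have hcD' : c ∈ D' := Finset.mem_erase.2 ⟨ne_of_gt hc₀, hc⟩
      exact absurd (lt_of_le_of_lt (D'.min'_le c hcD') hc₁) (lt_irrefl _)
    refine ⟨insert c E', ?_, ?_⟩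
    · intro e he
      rcases Finset.mem_insert.1 he with rfl | he
      · exact ⟨hPc, hcD, d₀, hd₀D, hc₀⟩
      · obtain ⟨hP, heD', d, hd, hde⟩ := hE' e he
        have heD : e ∉ D := by
          intro heDmem
          have : e ≠ d₀ := by
            have : d₀ < e := lt_trans (lt_of_lt_of_le hd₀₁ (D'.min'_le d hd)) hde
            exact ne_of_gt this
          exact heD' (Finset.mem_erase.2 ⟨this, heDmem⟩)
        exact ⟨hP, heD, d, Finset.mem_of_mem_erase hd, hde⟩
    · rw [Finset.card_insert_of_notMem hcE']
      omega

def ZerosCountLE' (J : Set ℝ) (f : ℝ → ℝ) (l : ℕ) : Prop :=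
  ∃ Z : Finset ℝ, (∀ t : ℝ, t ∈ Z ↔ t ∈ J ∧ f t = 0) ∧ ∑ t ∈ Z, zeroOrder f t ≤ l

lemma zerosCountLE'_mono {J : Set ℝ} {f : ℝ → ℝ} {l l' : ℕ} (h : ZerosCountLE' J f l)
    (hl : l ≤ l') : ZerosCountLE' J f l' := by
  obtain ⟨Z, h1, h2⟩ := h
  exact ⟨Z, h1, le_trans h2 hl⟩

lemma core_count (φ : ℝ → ℝ) (a b : ℝ) (Y : Finset ℝ) (w : ℝ → ℕ)
    (hord : ∀ t, t ∈ Ioo a b → φ t = 0 →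
      zeroOrder φ t ≤ w t + 1 ∧ (w t ≠ 0 → t ∈ Y))
    (hroll : ∀ x y, x ∈ Ioo a b → y ∈ Ioo a b → x < y → φ x = 0 → φ y = 0 →
      ∃ c, x < c ∧ c < y ∧ c ∈ Ioo a b ∧ c ∈ Y ∧ 1 ≤ w c) :
    ZerosCountLE' (Ioo a b) φ ((Y.filter (fun s => s ∈ Ioo a b)).sum w + 1) := by
  set P : ℝ → Prop := fun c => c ∈ Ioo a b ∧ c ∈ Y ∧ 1 ≤ w c with hP
  set S : Set ℝ := {t | t ∈ Ioo a b ∧ φ t = 0} with hS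
  have hgap : ∀ D : Finset ℝ, (↑D ⊆ S) →
      ∀ x ∈ D, ∀ y ∈ D, x < y → ∃ c, x < c ∧ c < y ∧ P c := by
    intro D hD x hx y hy hxy
    have hxS := hD hx
    have hyS := hD hy
    obtain ⟨c, h1, h2, h3, h4, h5⟩ := hroll x y hxS.1 hyS.1 hxy hxS.2 hyS.2
    exact ⟨c, h1, h2, h3, h4, h5⟩
  -- finiteness of the zero set
  have hSfin : S.Finite := by
    by_contra hinf
    rw [← Set.not_infinite, not_not] at hinf

    obtain ⟨D, hDsub, hDcard⟩ := hinf.exists_subset_card_eq (Y.card + 2)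
    obtain ⟨E, hE, hcard⟩ := exists_gap_finset P D (hgap D hDsub)
    have hEY : E ⊆ Y := fun e he => (hE e he).1.2.1
    have := Finset.card_le_card hEY
    omega
  set Z : Finset ℝ := hSfin.toFinset with hZ
  have hZmem : ∀ t : ℝ, t ∈ Z ↔ t ∈ Ioo a b ∧ φ t = 0 := by
    intro t
    simp [hZ, hS, Set.Finite.mem_toFinset]
  refine ⟨Z, hZmem, ?_⟩
  obtain ⟨E, hE, hcard⟩ := exists_gap_finset P Z
    (hgap Z (fun x hx => by simpa [hZ, Set.Finite.coe_toFinset] using hx))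
  -- sums
  have h1 : ∑ t ∈ Z, zeroOrder φ t ≤ ∑ t ∈ Z, w t + Z.card := by
    have : ∑ t ∈ Z, zeroOrder φ t ≤ ∑ t ∈ Z, (w t + 1) := by
      refine Finset.sum_le_sum fun t ht => ?_
      have h := (hZmem t).1 ht
      exact (hord t h.1 h.2).1
    simpa [Finset.sum_add_distrib] using this
  have h2 : ∑ t ∈ Z, w t = ∑ t ∈ Z.filter (fun s => w s ≠ 0), w t :=
    (Finset.sum_filter_ne_zero Z).symm
  have h3 : Z.card ≤ E.card + 1 := hcard
  have h4 : E.card ≤ ∑ t ∈ E, w t := by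
    calc E.card = ∑ _t ∈ E, 1 := by simp
    _ ≤ ∑ t ∈ E, w t := Finset.sum_le_sum fun t ht => (hE t ht).1.2.2
  have hdisj : Disjoint (Z.filter (fun s => w s ≠ 0)) E := by
    rw [Finset.disjoint_left]
    intro x hx hxE
    exact (hE x hxE).2.1 (Finset.mem_of_mem_filter x hx)
  have hsub : (Z.filter (fun s => w s ≠ 0)) ∪ E ⊆ Y.filter (fun s => s ∈ Ioo a b) := by
    intro x hx
    rcases Finset.mem_union.1 hx with hx | hx
    · rw [Finset.mem_filter] at hx
      have hxZ := (hZmem x).1 hx.1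
      exact Finset.mem_filter.2 ⟨(hord x hxZ.1 hxZ.2).2 hx.2, hxZ.1⟩
    · exact Finset.mem_filter.2 ⟨(hE x hx).1.2.1, (hE x hx).1.1⟩
  have h5 : ∑ t ∈ Z.filter (fun s => w s ≠ 0), w t + ∑ t ∈ E, w t
      ≤ (Y.filter (fun s => s ∈ Ioo a b)).sum w := by
    rw [← Finset.sum_union hdisj]
    exact Finset.sum_le_sum_of_subset hsub
  omega

lemma glue2 (φ : ℝ → ℝ) {a m b : ℝ} (ham : a < m) (hmb : m < b) {k m₁ m₂ : ℕ}
    (hk : φ m = 0 → zeroOrder φ m ≤ k)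
    (h₁ : ZerosCountLE' (Ioo a m) φ m₁) (h₂ : ZerosCountLE' (Ioo m b) φ m₂) :
    ZerosCountLE' (Ioo a b) φ (m₁ + k + m₂) := by
  obtain ⟨Z₁, hZ₁, hs₁⟩ := h₁
  obtain ⟨Z₂, hZ₂, hs₂⟩ := h₂
  set Zm : Finset ℝ := if φ m = 0 then {m} else ∅ with hZm
  refine ⟨Z₁ ∪ Zm ∪ Z₂, ?_, ?_⟩
  · intro t
    constructor
    · intro ht
      rcases Finset.mem_union.1 ht with ht | ht
      · rcases Finset.mem_union.1 ht with ht | ht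
        · have := (hZ₁ t).1 ht
          exact ⟨⟨this.1.1, lt_trans this.1.2 hmb⟩, this.2⟩
        · rw [hZm] at ht
          by_cases hm : φ m = 0
          · rw [if_pos hm] at ht
            have : t = m := Finset.mem_singleton.1 ht
            subst this
            exact ⟨⟨ham, hmb⟩, hm⟩
          · rw [if_neg hm] at ht
            exact absurd ht (Finset.notMem_empty t)
      · have := (hZ₂ t).1 ht
        exact ⟨⟨lt_trans ham this.1.1, this.1.2⟩, this.2⟩
    · rintro ⟨⟨hta, htb⟩, hφ⟩
      rcases lt_trichotomy t m with h | h | h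
      · exact Finset.mem_union.2 (Or.inl (Finset.mem_union.2 (Or.inl ((hZ₁ t).2 ⟨⟨hta, h⟩, hφ⟩))))
      · subst h
        refine Finset.mem_union.2 (Or.inl (Finset.mem_union.2 (Or.inr ?_)))
        rw [hZm, if_pos hφ]
        exact Finset.mem_singleton_self t
      · exact Finset.mem_union.2 (Or.inr ((hZ₂ t).2 ⟨⟨h, htb⟩, hφ⟩))
  · have hd₁ : Disjoint Z₁ Zm := by
      rw [Finset.disjoint_left]
      intro x hx hxm
      have hx1 := (hZ₁ x).1 hx
      rw [hZm] at hxm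
      by_cases hm : φ m = 0
      · rw [if_pos hm] at hxm
        have : x = m := Finset.mem_singleton.1 hxm
        exact absurd (this ▸ hx1.1.2) (lt_irrefl m)
      · rw [if_neg hm] at hxm
        exact Finset.notMem_empty x hxm
    have hd₂ : Disjoint (Z₁ ∪ Zm) Z₂ := by
      rw [Finset.disjoint_left]
      intro x hx hx2
      have hx2' := (hZ₂ x).1 hx2
      rcases Finset.mem_union.1 hx with hx | hx
      · have := (hZ₁ x).1 hx
        exact absurd (lt_trans this.1.2 hx2'.1.1) (lt_irrefl _)
      · rw [hZm] at hx
        by_cases hm : φ m = 0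
        · rw [if_pos hm] at hx
          have : x = m := Finset.mem_singleton.1 hx
          exact absurd (this ▸ hx2'.1.1) (lt_irrefl _)
        · rw [if_neg hm] at hx
          exact Finset.notMem_empty x hx
    rw [Finset.sum_union hd₂, Finset.sum_union hd₁]
    have hZmsum : ∑ t ∈ Zm, zeroOrder φ t ≤ k := by
      rw [hZm]
      by_cases hm : φ m = 0
      · rw [if_pos hm, Finset.sum_singleton]
        exact hk hm
      · rw [if_neg hm]
        simp
    omega

lemma glue_split (φ : ℝ → ℝ) (Y : Finset ℝ) (w cst : ℝ → ℕ) (a : ℝ) :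
    ∀ (n : ℕ) (T : Finset ℝ) (b : ℝ), T.card = n → a < b → (∀ t ∈ T, t ∈ Ioo a b) →
    (∀ x y : ℝ, a ≤ x → y ≤ b → x < y → (∀ t ∈ T, t ∉ Ioo x y) →
        ZerosCountLE' (Ioo x y) φ ((Y.filter (fun s => s ∈ Ioo x y)).sum w + 1)) →
    (∀ t ∈ T, φ t = 0 → zeroOrder φ t ≤ cst t) →
    ZerosCountLE' (Ioo a b) φ
      (((Y \ T).filter (fun s => s ∈ Ioo a b)).sum w + (T.card + 1) + T.sum cst) := by
  intro n
  induction n with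
  | zero =>
    intro T b hcard hab hT hsub hc
    have hTe : T = ∅ := Finset.card_eq_zero.1 hcard
    subst hTe
    have := hsub a b le_rfl le_rfl hab (by simp)
    simpa using this
  | succ n ih =>
    intro T b hcard hab hT hsub hc
    have hTne : T.Nonempty := Finset.card_pos.1 (by omega)
    set t' := T.max' hTne with ht'
    have ht'T : t' ∈ T := T.max'_mem hTne
    have ht'I : t' ∈ Ioo a b := hT t' ht'T
    set T' := T.erase t' with hT'
    have hT'card : T'.card = n := by
      rw [hT']
      have := Finset.card_erase_add_one ht'T
      omega
    have hT'lt : ∀ t ∈ T', t < t' := fun t ht =>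
      lt_of_le_of_ne (T.le_max' t (Finset.mem_of_mem_erase ht)) (Finset.ne_of_mem_erase ht)
    -- left part
    have h₁ := ih T' t' hT'card ht'I.1
      (fun t ht => ⟨(hT t (Finset.mem_of_mem_erase ht)).1, hT'lt t ht⟩)
      (fun x y hx hy hxy havoid => by
        refine hsub x y hx (le_trans hy (le_of_lt ht'I.2)) hxy ?_
        intro t ht hmem
        rcases eq_or_ne t t' with rfl | hne
        · exact absurd hmem.2 (not_lt.2 hy)
        · exact havoid t (Finset.mem_erase.2 ⟨hne, ht⟩) hmem)
      (fun t ht => hc t (Finset.mem_of_mem_erase ht))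
    -- right part
    have h₂ := hsub t' b (le_of_lt ht'I.1) le_rfl ht'I.2
      (fun t ht hmem => absurd hmem.1 (not_lt.2 (T.le_max' t ht)))
    -- glue
    have hglue := glue2 φ ht'I.1 ht'I.2 (hc t' ht'T) h₁ h₂
    refine zerosCountLE'_mono hglue ?_
    -- arithmetic
    have hsum1 : ((Y \ T').filter (fun s => s ∈ Ioo a t')).sum w
        + (Y.filter (fun s => s ∈ Ioo t' b)).sum w
        ≤ ((Y \ T).filter (fun s => s ∈ Ioo a b)).sum w := by
      have hdisj : Disjoint ((Y \ T').filter (fun s => s ∈ Ioo a t'))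
          (Y.filter (fun s => s ∈ Ioo t' b)) := by
        rw [Finset.disjoint_left]
        intro x hx hx2
        have h1 := (Finset.mem_filter.1 hx).2
        have h2 := (Finset.mem_filter.1 hx2).2
        exact absurd (lt_trans h1.2 h2.1) (lt_irrefl x)
      have hsubset : ((Y \ T').filter (fun s => s ∈ Ioo a t'))
          ∪ (Y.filter (fun s => s ∈ Ioo t' b)) ⊆ (Y \ T).filter (fun s => s ∈ Ioo a b) := by
        intro x hx
        rcases Finset.mem_union.1 hx with hx | hx
        · rw [Finset.mem_filter] at hx ⊢
          obtain ⟨hmem, hIoo⟩ := hx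
          rw [Finset.mem_sdiff] at hmem ⊢
          refine ⟨⟨hmem.1, fun hxT => ?_⟩, hIoo.1, lt_trans hIoo.2 ht'I.2⟩
          rcases eq_or_ne x t' with rfl | hne
          · exact absurd hIoo.2 (lt_irrefl _)
          · exact hmem.2 (Finset.mem_erase.2 ⟨hne, hxT⟩)
        · rw [Finset.mem_filter] at hx ⊢
          obtain ⟨hmem, hIoo⟩ := hx
          rw [Finset.mem_sdiff]
          refine ⟨⟨hmem, fun hxT => ?_⟩, lt_trans ht'I.1 hIoo.1, hIoo.2⟩
          exact absurd hIoo.1 (not_lt.2 (T.le_max' x hxT))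
      calc ((Y \ T').filter (fun s => s ∈ Ioo a t')).sum w
          + (Y.filter (fun s => s ∈ Ioo t' b)).sum w
          = (((Y \ T').filter (fun s => s ∈ Ioo a t'))
            ∪ (Y.filter (fun s => s ∈ Ioo t' b))).sum w := (Finset.sum_union hdisj).symm
        _ ≤ _ := Finset.sum_le_sum_of_subset hsubset
    have hsum2 : T'.sum cst + cst t' = T.sum cst := by
      rw [hT', Finset.sum_erase_add T cst ht'T]
    have hcardT : T.card = n + 1 := hcard
    omega

/-- mul of reps: vanishing order adds. -/
lemma zeroOrder_mul_eq {u v g₁ g₂ : ℝ → ℝ} {t : ℝ} {a b : ℕ}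
    (hg₁ : AnalyticAt ℝ g₁ t) (hg₁t : g₁ t ≠ 0)
    (hg₂ : AnalyticAt ℝ g₂ t) (hg₂t : g₂ t ≠ 0)
    (hu : u =ᶠ[𝓝 t] fun x => (x - t) ^ a * g₁ x)
    (hv : v =ᶠ[𝓝 t] fun x => (x - t) ^ b * g₂ x) :
    zeroOrder (fun x => u x * v x) t = a + b ∧
      iteratedDeriv (a + b) (fun x => u x * v x) t ≠ 0 := by
  have hrep : (fun x => u x * v x) =ᶠ[𝓝 t] fun x => (x - t) ^ (a + b) * (g₁ x * g₂ x) := by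
    filter_upwards [hu, hv] with x h1 h2
    simp only [h1, h2]
    ring
  have := zeroOrder_eq_of_rep (hg₁.mul hg₂) (mul_ne_zero hg₁t hg₂t) hrep
  exact ⟨this.1, this.2.1⟩

lemma pb1 {W u v P Q : ℝ → ℝ} {t : ℝ}
    (hW : AnalyticAt ℝ W t) (hWne : ¬ W =ᶠ[𝓝 t] 0)
    (hu : AnalyticAt ℝ u t) (hune : ¬ u =ᶠ[𝓝 t] 0)
    (hv : AnalyticAt ℝ v t) (hvne : ¬ v =ᶠ[𝓝 t] 0)
    (hP : AnalyticAt ℝ P t) (hQ : AnalyticAt ℝ Q t)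
    (heq : ∀ᶠ x in 𝓝 t, u x * v x = P x * deriv W x + Q x * W x) :
    zeroOrder W t ≤ zeroOrder u t + zeroOrder v t + 1 := by
  rcases Nat.eq_zero_or_eq_succ_pred (zeroOrder W t) with hk | hk
  · omega
  rw [hk]
  set k' := (zeroOrder W t).pred with hk'
  obtain ⟨g, hg, hgt, hrepW⟩ := zeroOrder_spec hW hWne
  rw [hk] at hrepW
  have hrepW' : deriv W =ᶠ[𝓝 t]
      fun x => (x - t) ^ k' * (((k' : ℝ) + 1) * g x + (x - t) * deriv g x) :=
    rep_deriv hg hrepW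
  set G₂ : ℝ → ℝ := fun x => ((k' : ℝ) + 1) * g x + (x - t) * deriv g x with hG₂
  have hG₂a : AnalyticAt ℝ G₂ t :=
    (analyticAt_const.mul hg).add ((analyticAt_id.sub analyticAt_const).mul (analyticAt_deriv hg))
  have hrepUV : (fun x => u x * v x) =ᶠ[𝓝 t]
      fun x => (x - t) ^ k' * (P x * G₂ x + Q x * ((x - t) * g x)) := by
    filter_upwards [heq, hrepW, hrepW'] with x h1 h2 h3
    rw [h1, h2, h3]
    simp only [Nat.succ_eq_add_one, pow_succ]
    ring
  have hfac : AnalyticAt ℝ (fun x => P x * G₂ x + Q x * ((x - t) * g x)) t :=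
    (hP.mul hG₂a).add (hQ.mul ((analyticAt_id.sub analyticAt_const).mul hg))
  have hvan := vanish_of_rep hfac hrepUV
  obtain ⟨g₁, hg₁, hg₁t, hrepu⟩ := zeroOrder_spec hu hune
  obtain ⟨g₂, hg₂, hg₂t, hrepv⟩ := zeroOrder_spec hv hvne
  obtain ⟨-, hne⟩ := zeroOrder_mul_eq hg₁ hg₁t hg₂ hg₂t hrepu hrepv
  by_contra habs
  push_neg at habs
  exact hne (hvan _ (by omega))

lemma pb2 {W u v P₀ Q : ℝ → ℝ} {t : ℝ}
    (hW : AnalyticAt ℝ W t) (hWne : ¬ W =ᶠ[𝓝 t] 0)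
    (hu : AnalyticAt ℝ u t) (hune : ¬ u =ᶠ[𝓝 t] 0)
    (hv : AnalyticAt ℝ v t) (hvne : ¬ v =ᶠ[𝓝 t] 0)
    (hP₀ : AnalyticAt ℝ P₀ t) (hQ : AnalyticAt ℝ Q t)
    (heq : ∀ᶠ x in 𝓝 t, u x * v x = ((x - t) * P₀ x) * deriv W x + Q x * W x) :
    zeroOrder W t ≤ zeroOrder u t + zeroOrder v t := by
  rcases Nat.eq_zero_or_eq_succ_pred (zeroOrder W t) with hk | hk
  · omega
  set k' := (zeroOrder W t).pred with hk'
  obtain ⟨g, hg, hgt, hrepW⟩ := zeroOrder_spec hW hWne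
  rw [hk] at hrepW
  have hrepW' : deriv W =ᶠ[𝓝 t]
      fun x => (x - t) ^ k' * (((k' : ℝ) + 1) * g x + (x - t) * deriv g x) :=
    rep_deriv hg hrepW
  set G₂ : ℝ → ℝ := fun x => ((k' : ℝ) + 1) * g x + (x - t) * deriv g x with hG₂
  have hG₂a : AnalyticAt ℝ G₂ t :=
    (analyticAt_const.mul hg).add ((analyticAt_id.sub analyticAt_const).mul (analyticAt_deriv hg))
  have hrepUV : (fun x => u x * v x) =ᶠ[𝓝 t]
      fun x => (x - t) ^ (k' + 1) * (P₀ x * G₂ x + Q x * g x) := by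
    filter_upwards [heq, hrepW, hrepW'] with x h1 h2 h3
    rw [h1, h2, h3]
    simp only [Nat.succ_eq_add_one, pow_succ]
    ring
  have hfac : AnalyticAt ℝ (fun x => P₀ x * G₂ x + Q x * g x) t :=
    (hP₀.mul hG₂a).add (hQ.mul hg)
  have hvan := vanish_of_rep hfac hrepUV
  obtain ⟨g₁, hg₁, hg₁t, hrepu⟩ := zeroOrder_spec hu hune
  obtain ⟨g₂, hg₂, hg₂t, hrepv⟩ := zeroOrder_spec hv hvne
  obtain ⟨-, hne⟩ := zeroOrder_mul_eq hg₁ hg₁t hg₂ hg₂t hrepu hrepv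
  by_contra habs
  push_neg at habs
  exact hne (hvan _ (by omega))

lemma pb1' {f f₁ : ℝ → ℝ} {t : ℝ}
    (hf : AnalyticAt ℝ f t) (hfne : ¬ f =ᶠ[𝓝 t] 0) (hf0 : f t = 0)
    (hf₁ : AnalyticAt ℝ f₁ t)
    (hW : AnalyticAt ℝ (fun x => f₁ x * deriv f x - deriv f₁ x * f x) t)
    (hWne : ¬ (fun x => f₁ x * deriv f x - deriv f₁ x * f x) =ᶠ[𝓝 t] 0) :
    zeroOrder f t ≤ zeroOrder (fun x => f₁ x * deriv f x - deriv f₁ x * f x) t + 1 := by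
  set W : ℝ → ℝ := fun x => f₁ x * deriv f x - deriv f₁ x * f x with hWdef
  have hb : 1 ≤ zeroOrder f t := zeroOrder_pos hf hfne hf0
  obtain ⟨b', hbb⟩ : ∃ b', zeroOrder f t = b' + 1 := ⟨zeroOrder f t - 1, by omega⟩
  obtain ⟨g, hg, hgt, hrepf⟩ := zeroOrder_spec hf hfne
  rw [hbb] at hrepf
  have hrepf' : deriv f =ᶠ[𝓝 t]
      fun x => (x - t) ^ b' * (((b' : ℝ) + 1) * g x + (x - t) * deriv g x) :=
    rep_deriv hg hrepf
  set Hf : ℝ → ℝ := fun x => ((b' : ℝ) + 1) * g x + (x - t) * deriv g x with hHf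
  have hHfa : AnalyticAt ℝ Hf t :=
    (analyticAt_const.mul hg).add ((analyticAt_id.sub analyticAt_const).mul (analyticAt_deriv hg))
  have hrepW : W =ᶠ[𝓝 t]
      fun x => (x - t) ^ b' * (f₁ x * Hf x - (x - t) * (deriv f₁ x * g x)) := by
    filter_upwards [hrepf, hrepf'] with x h1 h2
    simp only [hWdef, h1, h2, hHf, pow_succ]
    ring
  have hfac : AnalyticAt ℝ (fun x => f₁ x * Hf x - (x - t) * (deriv f₁ x * g x)) t :=
    (hf₁.mul hHfa).sub ((analyticAt_id.sub analyticAt_const).mul ((analyticAt_deriv hf₁).mul hg))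
  have hvan := vanish_of_rep hfac hrepW
  obtain ⟨G, hG, hGt, hrepWW⟩ := zeroOrder_spec hW hWne
  have hne := (zeroOrder_eq_of_rep hG hGt hrepWW).2.1
  by_contra habs
  push_neg at habs
  exact hne (hvan _ (by omega))

lemma pb3 {f f₁ : ℝ → ℝ} {t : ℝ}
    (hf : AnalyticAt ℝ f t) (hfne : ¬ f =ᶠ[𝓝 t] 0) (hf0 : f t = 0)
    (hf₁ : AnalyticAt ℝ f₁ t) (hf₁ne : ¬ f₁ =ᶠ[𝓝 t] 0) (hf₁0 : f₁ t = 0) :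
    zeroOrder f t ≤ zeroOrder f₁ t
      + zeroOrder (fun x => f₁ x * deriv f x - deriv f₁ x * f x) t := by
  set W : ℝ → ℝ := fun x => f₁ x * deriv f x - deriv f₁ x * f x with hWdef
  have hb : 1 ≤ zeroOrder f t := zeroOrder_pos hf hfne hf0
  have ha : 1 ≤ zeroOrder f₁ t := zeroOrder_pos hf₁ hf₁ne hf₁0
  by_cases hab : zeroOrder f t ≤ zeroOrder f₁ t
  · omega
  push_neg at hab
  obtain ⟨a', haa⟩ : ∃ a', zeroOrder f₁ t = a' + 1 := ⟨zeroOrder f₁ t - 1, by omega⟩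
  obtain ⟨b', hbb⟩ : ∃ b', zeroOrder f t = b' + 1 := ⟨zeroOrder f t - 1, by omega⟩
  have hab' : a' < b' := by omega
  obtain ⟨g, hg, hgt, hrepf⟩ := zeroOrder_spec hf hfne
  obtain ⟨g₁, hg₁, hg₁t, hrepf₁⟩ := zeroOrder_spec hf₁ hf₁ne
  rw [hbb] at hrepf
  rw [haa] at hrepf₁
  have hrepf' : deriv f =ᶠ[𝓝 t]
      fun x => (x - t) ^ b' * (((b' : ℝ) + 1) * g x + (x - t) * deriv g x) :=
    rep_deriv hg hrepf
  have hrepf₁' : deriv f₁ =ᶠ[𝓝 t]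
      fun x => (x - t) ^ a' * (((a' : ℝ) + 1) * g₁ x + (x - t) * deriv g₁ x) :=
    rep_deriv hg₁ hrepf₁
  set Hf : ℝ → ℝ := fun x => ((b' : ℝ) + 1) * g x + (x - t) * deriv g x with hHf
  set H₁ : ℝ → ℝ := fun x => ((a' : ℝ) + 1) * g₁ x + (x - t) * deriv g₁ x with hH₁
  set G : ℝ → ℝ := fun x => g₁ x * Hf x - H₁ x * g x with hG
  have hGa : AnalyticAt ℝ G t := by
    have hHfa : AnalyticAt ℝ Hf t :=
      (analyticAt_const.mul hg).add
        ((analyticAt_id.sub analyticAt_const).mul (analyticAt_deriv hg))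
    have hH₁a : AnalyticAt ℝ H₁ t :=
      (analyticAt_const.mul hg₁).add
        ((analyticAt_id.sub analyticAt_const).mul (analyticAt_deriv hg₁))
    exact (hg₁.mul hHfa).sub (hH₁a.mul hg)
  have hGt : G t ≠ 0 := by
    have : G t = ((b' : ℝ) - (a' : ℝ)) * (g₁ t * g t) := by
      simp only [hG, hHf, hH₁]
      simp
      ring
    rw [this]
    refine mul_ne_zero ?_ (mul_ne_zero hg₁t hgt)
    have : (a' : ℝ) < (b' : ℝ) := by exact_mod_cast hab'
    linarith
  have hrepW : W =ᶠ[𝓝 t] fun x => (x - t) ^ (a' + b' + 1) * G x := by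
    filter_upwards [hrepf, hrepf₁, hrepf', hrepf₁'] with x h1 h2 h3 h4
    simp only [hWdef, h1, h2, h3, h4, hG, pow_succ, pow_add]
    ring
  have := (zeroOrder_eq_of_rep hGa hGt hrepW).1
  rw [this, haa, hbb]
  omega

lemma roll_div {f f₁ : ℝ → ℝ} {x y x' y' : ℝ}
    (hx'y' : x' < y') (hx' : x' ∈ Ioo x y) (hy' : y' ∈ Ioo x y)
    (hfd : ∀ s ∈ Ioo x y, DifferentiableAt ℝ f s)
    (hf₁d : ∀ s ∈ Ioo x y, DifferentiableAt ℝ f₁ s)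
    (hf₁ne : ∀ s ∈ Ioo x y, f₁ s ≠ 0)
    (hfx : f x' = 0) (hfy : f y' = 0) :
    ∃ c ∈ Ioo x' y', f₁ c * deriv f c - deriv f₁ c * f c = 0 := by
  have hsub : Icc x' y' ⊆ Ioo x y := fun s hs =>
    ⟨lt_of_lt_of_le hx'.1 hs.1, lt_of_le_of_lt hs.2 hy'.2⟩
  have hsub' : Ioo x' y' ⊆ Ioo x y := fun s hs =>
    ⟨lt_trans hx'.1 hs.1, lt_trans hs.2 hy'.2⟩
  set h : ℝ → ℝ := fun s => f s / f₁ s with hh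
  have hcont : ContinuousOn h (Icc x' y') := by
    refine ContinuousOn.div ?_ ?_ (fun s hs => hf₁ne s (hsub hs))
    · exact fun s hs => (hfd s (hsub hs)).continuousAt.continuousWithinAt
    · exact fun s hs => (hf₁d s (hsub hs)).continuousAt.continuousWithinAt
  have hI : h x' = h y' := by simp [hh, hfx, hfy]
  have hder : ∀ s ∈ Ioo x' y', HasDerivAt h
      ((deriv f s * f₁ s - f s * deriv f₁ s) / (f₁ s) ^ 2) s := by
    intro s hs
    exact ((hfd s (hsub' hs)).hasDerivAt.div (hf₁d s (hsub' hs)).hasDerivAt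
      (hf₁ne s (hsub' hs)))
  obtain ⟨c, hc, hc0⟩ := exists_hasDerivAt_eq_zero hx'y' hcont hI hder
  refine ⟨c, hc, ?_⟩
  have hc2 : (f₁ c) ^ 2 ≠ 0 := pow_ne_zero 2 (hf₁ne c (hsub' hc))
  have := (div_eq_zero_iff.1 hc0).resolve_right hc2
  linarith

lemma roll_intfactor {W W' q : ℝ → ℝ} {x y x' y' : ℝ}
    (hx'y' : x' < y') (hx' : x' ∈ Ioo x y) (hy' : y' ∈ Ioo x y)
    (hq : ContinuousOn q (Ioo x y))
    (hWd : ∀ s ∈ Ioo x y, HasDerivAt W (W' s) s)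
    (hWx : W x' = 0) (hWy : W y' = 0) :
    ∃ c ∈ Ioo x' y', W' c + q c * W c = 0 := by
  have hsub : Icc x' y' ⊆ Ioo x y := fun s hs =>
    ⟨lt_of_lt_of_le hx'.1 hs.1, lt_of_le_of_lt hs.2 hy'.2⟩
  have hsub' : Ioo x' y' ⊆ Ioo x y := fun s hs =>
    ⟨lt_trans hx'.1 hs.1, lt_trans hs.2 hy'.2⟩
  set v : ℝ → ℝ := fun s => ∫ u in x'..s, q u with hv
  have hvd : ∀ s ∈ Ioo x y, HasDerivAt v (q s) s := by
    intro s hs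
    refine intervalIntegral.integral_hasDerivAt_right ?_ ?_ (hq.continuousAt
      (isOpen_Ioo.mem_nhds hs))
    · refine ContinuousOn.intervalIntegrable (hq.mono ?_)
      intro u hu
      rcases le_total x' s with hle | hle
      · rw [uIcc_of_le hle] at hu
        exact ⟨lt_of_lt_of_le hx'.1 hu.1, lt_of_le_of_lt hu.2 hs.2⟩
      · rw [uIcc_of_ge hle] at hu
        exact ⟨lt_of_lt_of_le hs.1 hu.1, lt_of_le_of_lt hu.2 hx'.2⟩
    · exact ContinuousOn.stronglyMeasurableAtFilter isOpen_Ioo hq s hs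
  set h : ℝ → ℝ := fun s => Real.exp (v s) * W s with hh
  have hder : ∀ s ∈ Ioo x y, HasDerivAt h
      (Real.exp (v s) * q s * W s + Real.exp (v s) * W' s) s := by
    intro s hs
    exact ((hvd s hs).exp.mul (hWd s hs))
  have hcont : ContinuousOn h (Icc x' y') := fun s hs =>
    ((hder s (hsub hs)).continuousAt).continuousWithinAt
  have hI : h x' = h y' := by simp [hh, hWx, hWy]
  obtain ⟨c, hc, hc0⟩ := exists_hasDerivAt_eq_zero hx'y' hcont hI
    (fun s hs => hder s (hsub' hs))
  refine ⟨c, hc, ?_⟩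
  have hexp : Real.exp (v c) ≠ 0 := Real.exp_ne_zero _
  have : Real.exp (v c) * (W' c + q c * W c) = 0 := by linarith
  have := (mul_eq_zero.1 this).resolve_left hexp
  linarith

theorem stmt13 (α β : ℝ) (hαβ : α < β)
    (f f₁ f₂ : ℝ → ℝ)
    (hf : AnalyticOnNhd ℝ f (Set.Ioo α β))
    (hf₁ : AnalyticOnNhd ℝ f₁ (Set.Ioo α β))
    (hf₂ : AnalyticOnNhd ℝ f₂ (Set.Ioo α β))
    (hsum : ∀ t ∈ Set.Ioo α β, f t = f₁ t + f₂ t)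
    (p₁ p₂ p₃ : Polynomial ℝ) (hp₃ : p₃ ≠ 0)
    (r : ℝ → ℝ)
    (hr : ∀ t ∈ Set.Ioo α β,
      r t = p₃.eval t * deriv (deriv f) t + p₂.eval t * deriv f t + p₁.eval t * f t)
    (hLf₁ : ∀ t ∈ Set.Ioo α β,
      p₃.eval t * deriv (deriv f₁) t + p₂.eval t * deriv f₁ t + p₁.eval t * f₁ t = 0)
    (hf₁ne : ∃ t ∈ Set.Ioo α β, f₁ t ≠ 0)
    (hrne : ∃ t ∈ Set.Ioo α β, r t ≠ 0)
    (n₁ n₂ n₃ : ℕ)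
    (hn₁ : ZerosCountEq (Set.Ioo α β) f₁ n₁)
    (hn₂ : ZerosCountEq (Set.Ioo α β) r n₂)
    (hn₃ : ZerosCountEq (Set.Ioo α β) (fun t => p₃.eval t) n₃) :
    (∃ t ∈ Set.Ioo α β, f t ≠ 0) ∧
    ZerosCountLE (Set.Ioo α β) f (3 * n₃ + 3 * n₁ + n₂ + 2) := by
  obtain ⟨Z₁, hZ₁, hZ₁s⟩ := hn₁
  obtain ⟨Z₂, hZ₂, hZ₂s⟩ := hn₂
  obtain ⟨Z₃, hZ₃, hZ₃s⟩ := hn₃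
  set I : Set ℝ := Set.Ioo α β with hIdef
  set W : ℝ → ℝ := fun x => f₁ x * deriv f x - deriv f₁ x * f x with hWdef
  have hWa : ∀ t ∈ I, AnalyticAt ℝ W t := fun t ht =>
    ((hf₁ t ht).mul (hf.deriv t ht)).sub ((hf₁.deriv t ht).mul (hf t ht))
  have hev : ∀ t ∈ I, ∀ᶠ x in 𝓝 t, x ∈ I := fun t ht => isOpen_Ioo.mem_nhds ht
  -- derivative of W
  have hWderiv : ∀ t ∈ I,
      HasDerivAt W (f₁ t * deriv (deriv f) t - deriv (deriv f₁) t * f t) t := by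
    intro t ht
    have h1 : HasDerivAt f₁ (deriv f₁ t) t := ((hf₁ t ht).differentiableAt).hasDerivAt
    have h2 : HasDerivAt (deriv f) (deriv (deriv f) t) t :=
      ((hf.deriv t ht).differentiableAt).hasDerivAt
    have h3 : HasDerivAt f (deriv f t) t := ((hf t ht).differentiableAt).hasDerivAt
    have h4 : HasDerivAt (deriv f₁) (deriv (deriv f₁) t) t :=
      ((hf₁.deriv t ht).differentiableAt).hasDerivAt
    have : HasDerivAt (fun x => f₁ x * deriv f x - deriv f₁ x * f x) _ t := (h1.mul h2).sub (h4.mul h3)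
    convert this using 1
    ring
  have hkey : ∀ t ∈ I, p₃.eval t * deriv W t + p₂.eval t * W t = f₁ t * r t := by
    intro t ht
    rw [(hWderiv t ht).deriv, hr t ht]
    simp only [hWdef]
    linear_combination (-(f t)) * hLf₁ t ht
  -- non-(eventually zero) facts
  have hne₁ : ∀ t ∈ I, ¬ f₁ =ᶠ[𝓝 t] 0 := fun t ht =>
    not_eventuallyEq_zero_of_finite_zeros isOpen_Ioo (fun x hx h0 => (hZ₁ x).2 ⟨hx, h0⟩) ht
  have hne₂ : ∀ t ∈ I, ¬ r =ᶠ[𝓝 t] 0 := fun t ht =>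
    not_eventuallyEq_zero_of_finite_zeros isOpen_Ioo (fun x hx h0 => (hZ₂ x).2 ⟨hx, h0⟩) ht
  have hne₃ : ∀ t ∈ I, ¬ (fun s => p₃.eval s) =ᶠ[𝓝 t] 0 := fun t ht =>
    not_eventuallyEq_zero_of_finite_zeros isOpen_Ioo (fun x hx h0 => (hZ₃ x).2 ⟨hx, h0⟩) ht
  -- r is analytic on I
  have hra : ∀ t ∈ I, AnalyticAt ℝ r t := by
    intro t ht
    have hLfa : AnalyticAt ℝ
        (fun x => p₃.eval x * deriv (deriv f) x + p₂.eval x * deriv f x + p₁.eval x * f x) t :=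
      (((analyticAt_polyEval p₃ t).mul (hf.deriv.deriv t ht)).add
        ((analyticAt_polyEval p₂ t).mul (hf.deriv t ht))).add
        ((analyticAt_polyEval p₁ t).mul (hf t ht))
    refine hLfa.congr ?_
    filter_upwards [hev t ht] with x hx
    exact (hr x hx).symm
  -- if f vanishes identically on I we contradict hrne
  have hfzero : ¬ (∀ t ∈ I, f t = 0) := by
    intro hall
    have hd1 : ∀ t ∈ I, deriv f t = 0 := by
      intro t ht
      have hev0 : f =ᶠ[𝓝 t] 0 := by
        filter_upwards [hev t ht] with x hx using hall x hx
      rw [hev0.deriv_eq]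
      exact deriv_const t 0
    have hd2 : ∀ t ∈ I, deriv (deriv f) t = 0 := by
      intro t ht
      have hev0 : deriv f =ᶠ[𝓝 t] 0 := by
        filter_upwards [hev t ht] with x hx using hd1 x hx
      rw [hev0.deriv_eq]
      exact deriv_const t 0
    obtain ⟨t₀, ht₀, hr₀⟩ := hrne
    apply hr₀
    rw [hr t₀ ht₀, hall t₀ ht₀, hd1 t₀ ht₀, hd2 t₀ ht₀]
    ring
  have hfne : ∀ t ∈ I, ¬ f =ᶠ[𝓝 t] 0 := by
    intro t ht hev0
    have := hf.eqOn_zero_of_preconnected_of_eventuallyEq_zero isPreconnected_Ioo ht hev0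
    exact hfzero fun s hs => this hs
  have hWne : ∀ t ∈ I, ¬ W =ᶠ[𝓝 t] 0 := by
    intro t ht hev0
    have hWOn : AnalyticOnNhd ℝ W I := fun s hs => hWa s hs
    have hWeq := hWOn.eqOn_zero_of_preconnected_of_eventuallyEq_zero isPreconnected_Ioo ht hev0
    have hfr : ∀ s ∈ I, f₁ s * r s = 0 := by
      intro s hs
      have hWev : W =ᶠ[𝓝 s] 0 := by
        filter_upwards [hev s hs] with x hx using hWeq hx
      have hdW : deriv W s = 0 := by rw [hWev.deriv_eq]; exact deriv_const s 0
      have hW0 : W s = 0 := hWeq hs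
      rw [← hkey s hs, hdW, hW0]
      ring
    have hsubZ : I ⊆ (↑(Z₁ ∪ Z₂) : Set ℝ) := by
      intro s hs
      rcases mul_eq_zero.1 (hfr s hs) with h | h
      · simp only [Finset.coe_union, Set.mem_union, Finset.mem_coe]
        exact Or.inl ((hZ₁ s).2 ⟨hs, h⟩)
      · simp only [Finset.coe_union, Set.mem_union, Finset.mem_coe]
        exact Or.inr ((hZ₂ s).2 ⟨hs, h⟩)
    exact ((Z₁ ∪ Z₂).finite_toSet.subset hsubZ).not_infinite (Set.Ioo_infinite hαβ)
  -- positivity of zero orders at zeros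
  have zo₁pos : ∀ t ∈ I, f₁ t = 0 → 1 ≤ zeroOrder f₁ t := fun t ht h0 =>
    zeroOrder_pos (hf₁ t ht) (hne₁ t ht) h0
  have zo₂pos : ∀ t ∈ I, r t = 0 → 1 ≤ zeroOrder r t := fun t ht h0 =>
    zeroOrder_pos (hra t ht) (hne₂ t ht) h0
  have zo₃pos : ∀ t ∈ I, p₃.eval t = 0 → 1 ≤ zeroOrder (fun s => p₃.eval s) t := fun t ht h0 =>
    zeroOrder_pos (analyticAt_polyEval p₃ t) (hne₃ t ht) h0
  have zoWpos : ∀ t ∈ I, W t = 0 → 1 ≤ zeroOrder W t := fun t ht h0 =>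
    zeroOrder_pos (hWa t ht) (hWne t ht) h0
  -- generic sum bound
  have hsum_le : ∀ (S : Finset ℝ) (ψ : ℝ → ℝ) (Z : Finset ℝ) (nn : ℕ),
      (∀ x : ℝ, x ∈ Z ↔ x ∈ I ∧ ψ x = 0) → (∑ x ∈ Z, zeroOrder ψ x ≤ nn) →
      (∀ s ∈ S, s ∈ I) → ∑ s ∈ S, zeroOrder ψ s ≤ nn := by
    intro S ψ Z nn hZc hZs hS
    have h1 : ∑ s ∈ S, zeroOrder ψ s = ∑ s ∈ S.filter (fun s => zeroOrder ψ s ≠ 0), zeroOrder ψ s :=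
      (Finset.sum_filter_ne_zero S).symm
    have h2 : S.filter (fun s => zeroOrder ψ s ≠ 0) ⊆ Z := by
      intro s hs
      rw [Finset.mem_filter] at hs
      have hψ : ψ s = 0 := by
        by_contra hne
        exact hs.2 (zeroOrder_eq_zero_of_ne hne)
      exact (hZc s).2 ⟨hS s hs.1, hψ⟩
    rw [h1]
    exact le_trans (Finset.sum_le_sum_of_subset h2) hZs
  -- the weight function for stage 1
  set w : ℝ → ℕ := fun t => zeroOrder f₁ t + zeroOrder r t with hwdef
  -- Stage 1 : count the zeros of W
  have hW_count : ZerosCountLE' I W (n₁ + n₂ + n₃ + 1) := by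
    have hT₃ : ∀ t ∈ Z₃, t ∈ Set.Ioo α β := fun t ht => ((hZ₃ t).1 ht).1
    have Hc : ∀ t ∈ Z₃, W t = 0 → zeroOrder W t ≤ w t := by
      intro t ht hW0
      have htI : t ∈ I := hT₃ t ht
      have hp₃0 : p₃.eval t = 0 := ((hZ₃ t).1 ht).2
      obtain ⟨q, hq⟩ : (Polynomial.X - Polynomial.C t) ∣ p₃ := Polynomial.dvd_iff_isRoot.2 hp₃0
      have heq : ∀ᶠ x in 𝓝 t, f₁ x * r x = ((x - t) * q.eval x) * deriv W x + p₂.eval x * W x := by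
        filter_upwards [hev t htI] with x hx
        have h1 := (hkey x hx).symm
        have h2 : p₃.eval x = (x - t) * q.eval x := by
          rw [hq]
          simp [Polynomial.eval_mul]
        rw [h1, h2]
      exact pb2 (hWa t htI) (hWne t htI) (hf₁ t htI) (hne₁ t htI) (hra t htI) (hne₂ t htI)
        (analyticAt_polyEval q t) (analyticAt_polyEval p₂ t) heq
    have Hsub : ∀ x y : ℝ, α ≤ x → y ≤ β → x < y → (∀ t ∈ Z₃, t ∉ Set.Ioo x y) →
        ZerosCountLE' (Set.Ioo x y) W
          (((Z₁ ∪ Z₂).filter (fun s => s ∈ Set.Ioo x y)).sum w + 1) := by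
      intro x y hx hy hxy havoid
      have hJsub : Set.Ioo x y ⊆ I := Set.Ioo_subset_Ioo hx hy
      have hp₃ne : ∀ s ∈ Set.Ioo x y, p₃.eval s ≠ 0 := by
        intro s hs h0
        exact havoid s ((hZ₃ s).2 ⟨hJsub hs, h0⟩) hs
      refine core_count W x y (Z₁ ∪ Z₂) w ?_ ?_
      · intro t ht hW0
        have htI : t ∈ I := hJsub ht
        constructor
        · have heq : ∀ᶠ s in 𝓝 t, f₁ s * r s = p₃.eval s * deriv W s + p₂.eval s * W s := by
            filter_upwards [hev t htI] with s hs using (hkey s hs).symm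
          exact pb1 (hWa t htI) (hWne t htI) (hf₁ t htI) (hne₁ t htI) (hra t htI) (hne₂ t htI)
            (analyticAt_polyEval p₃ t) (analyticAt_polyEval p₂ t) heq
        · intro hwne
          by_cases h1 : f₁ t = 0
          · exact Finset.mem_union.2 (Or.inl ((hZ₁ t).2 ⟨htI, h1⟩))
          · by_cases h2 : r t = 0
            · exact Finset.mem_union.2 (Or.inr ((hZ₂ t).2 ⟨htI, h2⟩))
            · exfalso
              apply hwne
              simp only [hwdef]
              rw [zeroOrder_eq_zero_of_ne h1, zeroOrder_eq_zero_of_ne h2]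
      · intro x' y' hx' hy' hx'y' hWx hWy
        have hq : ContinuousOn (fun s => p₂.eval s / p₃.eval s) (Set.Ioo x y) :=
          (Polynomial.continuous p₂).continuousOn.div
            (Polynomial.continuous p₃).continuousOn hp₃ne
        have hWd : ∀ s ∈ Set.Ioo x y, HasDerivAt W (deriv W s) s := fun s hs =>
          ((hWa s (hJsub hs)).differentiableAt).hasDerivAt
        obtain ⟨c, hc, hc0⟩ := roll_intfactor hx'y' hx' hy' hq hWd hWx hWy
        have hcJ : c ∈ Set.Ioo x y := ⟨lt_trans hx'.1 hc.1, lt_trans hc.2 hy'.2⟩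
        have hcI : c ∈ I := hJsub hcJ
        have hfr : f₁ c * r c = 0 := by
          rw [← hkey c hcI]
          have hp₃c := hp₃ne c hcJ
          have h0 : p₃.eval c * deriv W c + p₂.eval c * W c
              = p₃.eval c * (deriv W c + p₂.eval c / p₃.eval c * W c) := by
            field_simp
          rw [h0, hc0, mul_zero]
        refine ⟨c, hc.1, hc.2, hcJ, ?_, ?_⟩
        · rcases mul_eq_zero.1 hfr with h | h
          · exact Finset.mem_union.2 (Or.inl ((hZ₁ c).2 ⟨hcI, h⟩))
          · exact Finset.mem_union.2 (Or.inr ((hZ₂ c).2 ⟨hcI, h⟩))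
        · rcases mul_eq_zero.1 hfr with h | h
          · have := zo₁pos c hcI h
            simp only [hwdef]
            omega
          · have := zo₂pos c hcI h
            simp only [hwdef]
            omega
    have := glue_split W (Z₁ ∪ Z₂) w w α Z₃.card Z₃ β rfl hαβ hT₃ Hsub Hc
    refine zerosCountLE'_mono this ?_
    -- arithmetic
    have hcard₃ : Z₃.card ≤ n₃ := by
      calc Z₃.card = ∑ _t ∈ Z₃, 1 := by simp
        _ ≤ ∑ t ∈ Z₃, zeroOrder (fun s => p₃.eval s) t :=
            Finset.sum_le_sum fun t ht => zo₃pos t (hT₃ t ht) (by simpa using ((hZ₃ t).1 ht).2)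
        _ = n₃ := hZ₃s
    set A : Finset ℝ := ((Z₁ ∪ Z₂) \ Z₃).filter (fun s => s ∈ Set.Ioo α β) with hA
    have hdisj : Disjoint A Z₃ := by
      rw [Finset.disjoint_left]
      intro s hs hs3
      exact (Finset.mem_sdiff.1 (Finset.mem_filter.1 hs).1).2 hs3
    have hunion : ∑ s ∈ A, w s + ∑ s ∈ Z₃, w s = ∑ s ∈ A ∪ Z₃, w s :=
      (Finset.sum_union hdisj).symm
    have hAZI : ∀ s ∈ A ∪ Z₃, s ∈ I := by
      intro s hs
      rcases Finset.mem_union.1 hs with hs | hs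
      · exact (Finset.mem_filter.1 hs).2
      · exact hT₃ s hs
    have hsplit : ∑ s ∈ A ∪ Z₃, w s
        = ∑ s ∈ A ∪ Z₃, zeroOrder f₁ s + ∑ s ∈ A ∪ Z₃, zeroOrder r s := by
      simp only [hwdef]
      exact Finset.sum_add_distrib
    have hb1 : ∑ s ∈ A ∪ Z₃, zeroOrder f₁ s ≤ n₁ :=
      hsum_le (A ∪ Z₃) f₁ Z₁ n₁ hZ₁ (le_of_eq hZ₁s) hAZI
    have hb2 : ∑ s ∈ A ∪ Z₃, zeroOrder r s ≤ n₂ :=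
      hsum_le (A ∪ Z₃) r Z₂ n₂ hZ₂ (le_of_eq hZ₂s) hAZI
    have e1 : A.sum w = ∑ s ∈ A, w s := rfl
    have e2 : Z₃.sum w = ∑ s ∈ Z₃, w s := rfl
    omega
  obtain ⟨ZW, hZW, hZWs⟩ := hW_count
  -- Stage 2 : count the zeros of f
  have hf_count : ZerosCountLE' I f (3 * n₃ + 3 * n₁ + n₂ + 2) := by
    have hT₁ : ∀ t ∈ Z₁, t ∈ Set.Ioo α β := fun t ht => ((hZ₁ t).1 ht).1
    have Hc : ∀ t ∈ Z₁, f t = 0 → zeroOrder f t ≤ zeroOrder f₁ t + zeroOrder W t := by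
      intro t ht hf0
      have htI := hT₁ t ht
      exact pb3 (hf t htI) (hfne t htI) hf0 (hf₁ t htI) (hne₁ t htI) ((hZ₁ t).1 ht).2
    have Hsub : ∀ x y : ℝ, α ≤ x → y ≤ β → x < y → (∀ t ∈ Z₁, t ∉ Set.Ioo x y) →
        ZerosCountLE' (Set.Ioo x y) f
          ((ZW.filter (fun s => s ∈ Set.Ioo x y)).sum (fun t => zeroOrder W t) + 1) := by
      intro x y hx hy hxy havoid
      have hJsub : Set.Ioo x y ⊆ I := Set.Ioo_subset_Ioo hx hy
      have hf₁ne' : ∀ s ∈ Set.Ioo x y, f₁ s ≠ 0 := fun s hs h0 =>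
        havoid s ((hZ₁ s).2 ⟨hJsub hs, h0⟩) hs
      refine core_count f x y ZW (fun t => zeroOrder W t) ?_ ?_
      · intro t ht hf0
        have htI := hJsub ht
        constructor
        · exact pb1' (hf t htI) (hfne t htI) hf0 (hf₁ t htI) (hWa t htI) (hWne t htI)
        · intro hwne
          have hW0 : W t = 0 := by
            by_contra h
            exact hwne (zeroOrder_eq_zero_of_ne h)
          exact (hZW t).2 ⟨htI, hW0⟩
      · intro x' y' hx' hy' hx'y' hfx hfy
        obtain ⟨c, hc, hc0⟩ := roll_div hx'y' hx' hy'
          (fun s hs => (hf s (hJsub hs)).differentiableAt)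
          (fun s hs => (hf₁ s (hJsub hs)).differentiableAt) hf₁ne' hfx hfy
        have hcJ : c ∈ Set.Ioo x y := ⟨lt_trans hx'.1 hc.1, lt_trans hc.2 hy'.2⟩
        have hcI := hJsub hcJ
        have hWc : W c = 0 := hc0
        exact ⟨c, hc.1, hc.2, hcJ, (hZW c).2 ⟨hcI, hWc⟩, zoWpos c hcI hWc⟩
    have := glue_split f ZW (fun t => zeroOrder W t)
      (fun t => zeroOrder f₁ t + zeroOrder W t) α Z₁.card Z₁ β rfl hαβ hT₁ Hsub Hc
    refine zerosCountLE'_mono this ?_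
    have hcard₁ : Z₁.card ≤ n₁ := by
      calc Z₁.card = ∑ _t ∈ Z₁, 1 := by simp
        _ ≤ ∑ t ∈ Z₁, zeroOrder f₁ t :=
            Finset.sum_le_sum fun t ht => zo₁pos t (hT₁ t ht) ((hZ₁ t).1 ht).2
        _ = n₁ := hZ₁s
    set A : Finset ℝ := (ZW \ Z₁).filter (fun s => s ∈ Set.Ioo α β) with hA
    have hdisj : Disjoint A Z₁ := by
      rw [Finset.disjoint_left]
      intro s hs hs1
      exact (Finset.mem_sdiff.1 (Finset.mem_filter.1 hs).1).2 hs1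
    have hunion : ∑ s ∈ A, zeroOrder W s + ∑ s ∈ Z₁, zeroOrder W s
        = ∑ s ∈ A ∪ Z₁, zeroOrder W s := (Finset.sum_union hdisj).symm
    have hAZI : ∀ s ∈ A ∪ Z₁, s ∈ I := by
      intro s hs
      rcases Finset.mem_union.1 hs with hs | hs
      · exact (Finset.mem_filter.1 hs).2
      · exact hT₁ s hs
    have hbW : ∑ s ∈ A ∪ Z₁, zeroOrder W s ≤ n₁ + n₂ + n₃ + 1 :=
      hsum_le (A ∪ Z₁) W ZW (n₁ + n₂ + n₃ + 1) hZW hZWs hAZI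
    have hsplit : ∑ s ∈ Z₁, (zeroOrder f₁ s + zeroOrder W s)
        = ∑ s ∈ Z₁, zeroOrder f₁ s + ∑ s ∈ Z₁, zeroOrder W s := Finset.sum_add_distrib
    have hn₁eq : ∑ s ∈ Z₁, zeroOrder f₁ s = n₁ := hZ₁s
    have e1 : A.sum (fun t => zeroOrder W t) = ∑ s ∈ A, zeroOrder W s := rfl
    have e2 : Z₁.sum (fun t => zeroOrder f₁ t + zeroOrder W t)
        = ∑ s ∈ Z₁, (zeroOrder f₁ s + zeroOrder W s) := rfl
    omega
  obtain ⟨Zf, hZf, hZfs⟩ := hf_count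
  constructor
  · by_contra h
    push_neg at h
    exact hfzero h
  · exact ⟨Zf, hZf, hZfs⟩
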